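/- Let λ > 0 and let x_f be a nonzero real fixed point of ζ_λ lying in the open interval (0, √2). Then |ζ_λ'(x_f)| < 1, i.e. x_f is an attracting fixed point. -/

import Mathlib

/-- The real function `ζ_λ(x) = λ·x·e^{−x}/(x+1)`. -/
noncomputable def zeta (lam x : ℝ) : ℝ := lam * x * Real.exp (-x) / (x + 1)

theorem attracting_fixed_point_in_Ioo_zero_sqrt_two (lam : ℝ) (hlam : 0 < lam) (xf : ℝ)
    (hxf : xf ∈ Set.Ioo (0 : ℝ) (Real.sqrt 2)) (hfix : zeta lam xf = xf) :
    |deriv (zeta lam) xf| < 1 := by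
  obtain ⟨hx0, hx2⟩ := hxf
  have hx1 : xf + 1 ≠ 0 := by linarith
  have hxsq : xf ^ 2 < 2 := by
    nlinarith [Real.sq_sqrt (by norm_num : (2:ℝ) ≥ 0), Real.sqrt_nonneg 2]
  have hexp : Real.exp (-xf) > 0 := Real.exp_pos _
  -- from the fixed point equation: lam * exp (-xf) = xf + 1
  have hkey : lam * Real.exp (-xf) = xf + 1 := by
    have h : lam * xf * Real.exp (-xf) / (xf + 1) = xf := hfix
    field_simp at h
    have hxne : xf ≠ 0 := ne_of_gt hx0
    nlinarith [h]
  -- compute derivative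
  have hder : HasDerivAt (zeta lam)
      (((lam * Real.exp (-xf) + lam * xf * (Real.exp (-xf) * (-1))) * (xf + 1)
        - lam * xf * Real.exp (-xf) * 1) / (xf + 1) ^ 2) xf := by
    have h1 : HasDerivAt (fun x : ℝ => lam * x * Real.exp (-x))
        (lam * Real.exp (-xf) + lam * xf * (Real.exp (-xf) * (-1))) xf := by
      have he : HasDerivAt (fun x : ℝ => Real.exp (-x)) (Real.exp (-xf) * (-1)) xf := by
        have : HasDerivAt (fun x : ℝ => -x) (-1 : ℝ) xf := (hasDerivAt_id xf).neg
        simpa using this.exp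
      have hl : HasDerivAt (fun x : ℝ => lam * x) lam xf := by
        simpa using (hasDerivAt_id xf).const_mul lam
      simpa [Pi.mul_def, mul_comm, mul_assoc, mul_left_comm] using hl.mul he
    have h2 : HasDerivAt (fun x : ℝ => x + 1) 1 xf := by
      simpa using (hasDerivAt_id xf).add_const 1
    exact (h1.div h2 hx1)
  have hderiv : deriv (zeta lam) xf = (1 - xf - xf ^ 2) / (xf + 1) := by
    rw [hder.deriv]
    field_simp
    linear_combination (1 - xf - xf ^ 2) * hkey
  rw [hderiv, abs_div, abs_of_pos (by linarith : (0:ℝ) < xf + 1),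
    div_lt_one (by linarith : (0:ℝ) < xf + 1), abs_lt]
  constructor <;> nlinarith
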